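/- For all integers ℓ, P ≥ 0 there exists Q = Q(ℓ,P) with the following property: if A'₁, ..., A'_ℓ are pairwise disjoint vertex-sets in a 3-graph with |A'_i| ≥ Q for every i, then there exist subsets A_i ⊆ A'_i for i = 1,...,ℓ with |A_i| = P such that d(A_i, A_j, A_k) ∈ {0,1} for all (not necessarily distinct) i, j, k ∈ {1,...,ℓ}. -/

import Mathlib

open Classical

/-- The set of 3-element vertex sets `{x,y,z}` with `x ∈ X`, `y ∈ Y`, `z ∈ Z`. -/
noncomputable def triples3 (n : ℕ) (X Y Z : Finset (Fin n)) : Finset (Finset (Fin n)) :=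
  (Finset.powersetCard 3 (Finset.univ : Finset (Fin n))).filter
    (fun e => ∃ x ∈ X, ∃ y ∈ Y, ∃ z ∈ Z, e = {x, y, z})

/-- The density `d(X,Y,Z)` in the 3-graph with edge set `E`: the fraction of 3-element
sets `{x,y,z}` with `x ∈ X`, `y ∈ Y`, `z ∈ Z` that are edges. -/
noncomputable def dens3 (n : ℕ) (E : Finset (Finset (Fin n))) (X Y Z : Finset (Fin n)) : ℝ :=
  (((triples3 n X Y Z).filter (fun e => e ∈ E)).card : ℝ) / ((triples3 n X Y Z).card : ℝ)



open Finset

section Helpers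
variable {V : Type} [DecidableEq V]

lemma half_lemma (S : Finset V) (p : V → Bool) (m : ℕ) (h : 2*m ≤ S.card) :
    ∃ b, ∃ T ⊆ S, m ≤ T.card ∧ ∀ x ∈ T, p x = b := by
  have key := Finset.card_filter_add_card_filter_not (s := S) (p := fun x => p x = true)
  by_cases h1 : m ≤ (S.filter (fun x => p x = true)).card
  · exact ⟨true, _, filter_subset _ _, h1, fun x hx => (mem_filter.1 hx).2⟩
  · refine ⟨false, S.filter (fun x => ¬ p x = true), filter_subset _ _, by omega,
      fun x hx => by simpa using (mem_filter.1 hx).2⟩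

lemma swap12 (x y z : V) : ({x, y, z} : Finset V) = {y, x, z} := Finset.insert_comm x y {z}

lemma swap23 (x y z : V) : ({x, y, z} : Finset V) = {x, z, y} :=
  congrArg (insert x) (Finset.pair_comm y z)

lemma rot3 (x y z : V) : ({x, y, z} : Finset V) = {y, z, x} :=
  (swap12 x y z).trans (swap23 y x z)

lemma ins3 (x y z : V) : insert z ({x, y} : Finset V) = {x, y, z} := by
  ext w; simp; tauto

lemma distinct_of_card3 {x y z : V} (h : ({x, y, z} : Finset V).card = 3) :
    x ≠ y ∧ x ≠ z ∧ y ≠ z := by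
  refine ⟨?_, ?_, ?_⟩ <;> rintro rfl
  · rw [show ({x, x, z} : Finset V) = {x, z} from Finset.insert_idem x {z}] at h
    have := Finset.card_insert_le x ({z} : Finset V); simp at this; omega
  · rw [show ({x, y, x} : Finset V) = {x, y} by rw [swap23]; exact Finset.insert_idem x {y}] at h
    have := Finset.card_insert_le x ({y} : Finset V); simp at this; omega
  · rw [show ({x, y, y} : Finset V) = {x, y} from congrArg (insert x) (Finset.insert_idem y ∅)] at h
    have := Finset.card_insert_le x ({y} : Finset V); simp at this; omega

end Helpers

lemma seq2 (t : ℕ) : ∃ N : ℕ, ∀ (V : Type) [DecidableEq V] (S : Finset V) (χ : Finset V → Bool),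
    N ≤ S.card → ∃ f : Fin t → V, (∀ a, f a ∈ S) ∧ Function.Injective f ∧
      ∃ col : Fin t → Bool, ∀ a b : Fin t, a < b → χ {f a, f b} = col a := by
  induction t with
  | zero =>
    exact ⟨0, fun V _ S χ _ => ⟨Fin.elim0, fun a => a.elim0, fun a => a.elim0,
      Fin.elim0, fun a => a.elim0⟩⟩
  | succ t ih =>
    obtain ⟨N, hN⟩ := ih
    refine ⟨2*N+1, fun V _ S χ hS => ?_⟩
    obtain ⟨v, hv⟩ : S.Nonempty := card_pos.1 (by omega)
    obtain ⟨b0, T, hTsub, hTcard, hTp⟩ := half_lemma (S.erase v) (fun x => χ {v, x}) N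
      (by rw [card_erase_of_mem hv]; omega)
    obtain ⟨f, hfmem, hfinj, col, hcol⟩ := hN V T χ hTcard
    have hfv : ∀ a, f a ≠ v := fun a h => (mem_erase.1 (hTsub (hfmem a))).1 h
    refine ⟨Fin.cons v f, ?_, ?_, Fin.cons b0 col, ?_⟩
    · intro a
      refine Fin.cases hv (fun a' => ?_) a
      exact (erase_subset v S) (hTsub (hfmem a'))
    · rw [Fin.cons_injective_iff]
      exact ⟨fun ⟨a, ha⟩ => hfv a ha, hfinj⟩
    · intro a
      refine Fin.cases ?_ ?_ a
      · intro b hab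
        obtain ⟨b', rfl⟩ := Fin.eq_succ_of_ne_zero (Fin.pos_iff_ne_zero.1 hab)
        simpa using hTp (f b') (hfmem b')
      · intro a' b hab
        obtain ⟨b', rfl⟩ := Fin.eq_succ_of_ne_zero (Fin.pos_iff_ne_zero.1
          (lt_trans (Fin.succ_pos a') hab))
        simpa using hcol a' b' (Fin.succ_lt_succ_iff.1 hab)

lemma pigeonFin (t : ℕ) (col : Fin t → Bool) (m : ℕ) (h : 2*m ≤ t) :
    ∃ b, ∃ s : Finset (Fin t), m ≤ s.card ∧ ∀ a ∈ s, col a = b := by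
  obtain ⟨b, s, _, hc, hp⟩ := half_lemma (univ : Finset (Fin t)) col m (by simpa using h)
  exact ⟨b, s, hc, hp⟩

lemma R2 (m : ℕ) : ∃ N : ℕ, ∀ (V : Type) [DecidableEq V] (S : Finset V) (χ : Finset V → Bool),
    N ≤ S.card → ∃ T ⊆ S, m ≤ T.card ∧ ∃ b, ∀ x ∈ T, ∀ y ∈ T, x ≠ y → χ {x, y} = b := by
  obtain ⟨N, hN⟩ := seq2 (2*m)
  refine ⟨N, fun V _ S χ hS => ?_⟩
  obtain ⟨f, hmem, hinj, col, hcol⟩ := hN V S χ hS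
  obtain ⟨b, s, hscard, hsp⟩ := pigeonFin _ col m le_rfl
  refine ⟨s.image f, ?_, ?_, b, ?_⟩
  · intro x hx; obtain ⟨a, _, rfl⟩ := mem_image.1 hx; exact hmem a
  · rw [Finset.card_image_of_injective s hinj]; exact hscard
  · intro x hx y hy hxy
    obtain ⟨a, ha, rfl⟩ := mem_image.1 hx
    obtain ⟨a', ha', rfl⟩ := mem_image.1 hy
    rcases lt_trichotomy a a' with h | h | h
    · rw [hcol a a' h]; exact hsp a ha
    · exact absurd (congrArg f h) hxy
    · rw [pair_comm, hcol a' a h]; exact hsp a' ha'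

lemma seq3 (t : ℕ) : ∃ N : ℕ, ∀ (V : Type) [DecidableEq V] (S : Finset V) (χ : Finset V → Bool),
    N ≤ S.card → ∃ f : Fin t → V, (∀ a, f a ∈ S) ∧ Function.Injective f ∧
      ∃ col : Fin t → Bool, ∀ a b c : Fin t, a < b → b < c → χ {f a, f b, f c} = col a := by
  induction t with
  | zero =>
    exact ⟨0, fun V _ S χ _ => ⟨Fin.elim0, fun a => a.elim0, fun a => a.elim0,
      Fin.elim0, fun a => a.elim0⟩⟩
  | succ t ih =>
    obtain ⟨N, hN⟩ := ih
    obtain ⟨M, hM⟩ := R2 N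
    refine ⟨M+1, fun V _ S χ hS => ?_⟩
    obtain ⟨v, hv⟩ : S.Nonempty := card_pos.1 (by omega)
    obtain ⟨T, hTsub, hTcard, b0, hTp⟩ := hM V (S.erase v) (fun e => χ (insert v e))
      (by rw [card_erase_of_mem hv]; omega)
    obtain ⟨f, hfmem, hfinj, col, hcol⟩ := hN V T χ hTcard
    have hfv : ∀ a, f a ≠ v := fun a h => (mem_erase.1 (hTsub (hfmem a))).1 h
    refine ⟨Fin.cons v f, ?_, ?_, Fin.cons b0 col, ?_⟩
    · intro a
      refine Fin.cases hv (fun a' => ?_) a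
      exact (erase_subset v S) (hTsub (hfmem a'))
    · rw [Fin.cons_injective_iff]
      exact ⟨fun ⟨a, ha⟩ => hfv a ha, hfinj⟩
    · intro a
      refine Fin.cases ?_ ?_ a
      · intro b c hab hbc
        obtain ⟨b', rfl⟩ := Fin.eq_succ_of_ne_zero (Fin.pos_iff_ne_zero.1 hab)
        obtain ⟨c', rfl⟩ := Fin.eq_succ_of_ne_zero (Fin.pos_iff_ne_zero.1 (lt_trans hab hbc))
        have hne : f b' ≠ f c' := fun h => absurd (hfinj h) (Fin.ne_of_lt (Fin.succ_lt_succ_iff.1 hbc))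
        simpa using hTp (f b') (hfmem b') (f c') (hfmem c') hne
      · intro a' b c hab hbc
        obtain ⟨b', rfl⟩ := Fin.eq_succ_of_ne_zero (Fin.pos_iff_ne_zero.1
          (lt_trans (Fin.succ_pos a') hab))
        obtain ⟨c', rfl⟩ := Fin.eq_succ_of_ne_zero (Fin.pos_iff_ne_zero.1
          (lt_trans (Fin.succ_pos b') hbc))
        simpa using hcol a' b' c' (Fin.succ_lt_succ_iff.1 hab) (Fin.succ_lt_succ_iff.1 hbc)

lemma R3 (m : ℕ) : ∃ N : ℕ, ∀ (V : Type) [DecidableEq V] (S : Finset V) (χ : Finset V → Bool),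
    N ≤ S.card → ∃ T ⊆ S, m ≤ T.card ∧ ∃ b, ∀ x ∈ T, ∀ y ∈ T, ∀ z ∈ T,
      x ≠ y → x ≠ z → y ≠ z → χ {x, y, z} = b := by
  obtain ⟨N, hN⟩ := seq3 (2*m)
  refine ⟨N, fun V _ S χ hS => ?_⟩
  obtain ⟨f, hmem, hinj, col, hcol⟩ := hN V S χ hS
  obtain ⟨b, s, hscard, hsp⟩ := pigeonFin _ col m le_rfl
  have key : ∀ p ∈ s, ∀ q r, p < q → q < r → χ {f p, f q, f r} = b := by
    intro p hp q r hpq hqr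
    rw [hcol p q r hpq hqr]; exact hsp p hp
  refine ⟨s.image f, ?_, ?_, b, ?_⟩
  · intro x hx; obtain ⟨a, _, rfl⟩ := mem_image.1 hx; exact hmem a
  · rw [Finset.card_image_of_injective s hinj]; exact hscard
  · intro x hx y hy z hz hxy hxz hyz
    obtain ⟨a, ha, rfl⟩ := mem_image.1 hx
    obtain ⟨a', ha', rfl⟩ := mem_image.1 hy
    obtain ⟨a'', ha'', rfl⟩ := mem_image.1 hz
    have h1 : a ≠ a' := fun h => hxy (congrArg f h)
    have h2 : a ≠ a'' := fun h => hxz (congrArg f h)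
    have h3 : a' ≠ a'' := fun h => hyz (congrArg f h)
    rcases lt_trichotomy a a' with c1 | c1 | c1
    · rcases lt_trichotomy a' a'' with c2 | c2 | c2
      · exact key a ha a' a'' c1 c2
      · exact absurd c2 h3
      · rcases lt_trichotomy a a'' with c3 | c3 | c3
        · rw [swap23]; exact key a ha a'' a' c3 c2
        · exact absurd c3 h2
        · rw [show ({f a, f a', f a''} : Finset V) = {f a'', f a, f a'} by rw [swap23, swap12]]
          exact key a'' ha'' a a' c3 c1
    · exact absurd c1 h1
    · rcases lt_trichotomy a a'' with c2 | c2 | c2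
      · rw [swap12]; exact key a' ha' a a'' c1 c2
      · exact absurd c2 h2
      · rcases lt_trichotomy a' a'' with c3 | c3 | c3
        · rw [swap12, swap23]; exact key a' ha' a'' a c3 c2
        · exact absurd c3 h3
        · rw [show ({f a, f a', f a''} : Finset V) = {f a'', f a', f a} by rw [swap12, swap23, swap12]]
          exact key a'' ha'' a' a c3 c1

lemma seq21 (t m : ℕ) : ∃ N : ℕ, ∀ (V : Type) [DecidableEq V] (S Z : Finset V)
    (χ : Finset V → Bool), N ≤ S.card → t ≤ Z.card →
    ∃ g : Fin t → V, (∀ a, g a ∈ Z) ∧ Function.Injective g ∧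
      ∃ col : Fin t → Bool, ∃ X ⊆ S, m ≤ X.card ∧
        ∀ a, ∀ x ∈ X, ∀ y ∈ X, x ≠ y → χ {x, y, g a} = col a := by
  induction t with
  | zero =>
    exact ⟨m, fun V _ S Z χ hS _ => ⟨Fin.elim0, fun a => a.elim0, fun a => a.elim0,
      Fin.elim0, S, Finset.Subset.refl S, hS, fun a => a.elim0⟩⟩
  | succ t ih =>
    obtain ⟨N, hN⟩ := ih
    obtain ⟨M, hM⟩ := R2 N
    refine ⟨M, fun V _ S Z χ hS hZ => ?_⟩
    obtain ⟨v, hv⟩ : Z.Nonempty := card_pos.1 (by omega)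
    obtain ⟨T, hTsub, hTcard, b0, hTp⟩ := hM V S (fun e => χ (insert v e)) hS
    obtain ⟨g, hgmem, hginj, col, X, hXsub, hXcard, hprop⟩ := hN V T (Z.erase v) χ hTcard
      (by rw [card_erase_of_mem hv]; omega)
    have hgv : ∀ a, g a ≠ v := fun a h => (mem_erase.1 (hgmem a)).1 h
    refine ⟨Fin.cons v g, ?_, ?_, Fin.cons b0 col, X, hXsub.trans hTsub, hXcard, ?_⟩
    · intro a
      refine Fin.cases hv (fun a' => ?_) a
      exact (erase_subset v Z) (hgmem a')
    · rw [Fin.cons_injective_iff]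
      exact ⟨fun ⟨a, ha⟩ => hgv a ha, hginj⟩
    · intro a
      refine Fin.cases ?_ ?_ a
      · intro x hx y hy hxy
        rw [Fin.cons_zero, Fin.cons_zero, ← ins3]
        exact hTp x (hXsub hx) y (hXsub hy) hxy
      · intro a' x hx y hy hxy
        simpa using hprop a' x hx y hy hxy

lemma L21 (m : ℕ) : ∃ N : ℕ, ∀ (V : Type) [DecidableEq V] (S Z : Finset V)
    (χ : Finset V → Bool), N ≤ S.card → N ≤ Z.card →
    ∃ X ⊆ S, ∃ C ⊆ Z, m ≤ X.card ∧ m ≤ C.card ∧ ∃ b,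
      ∀ x ∈ X, ∀ y ∈ X, ∀ z ∈ C, x ≠ y → χ {x, y, z} = b := by
  obtain ⟨N, hN⟩ := seq21 (2*m) m
  refine ⟨max N (2*m), fun V _ S Z χ hS hZ => ?_⟩
  obtain ⟨g, hgmem, hginj, col, X, hXsub, hXcard, hprop⟩ :=
    hN V S Z χ (le_trans (le_max_left _ _) hS) (le_trans (le_max_right _ _) hZ)
  obtain ⟨b, s, hscard, hsp⟩ := pigeonFin _ col m le_rfl
  refine ⟨X, hXsub, s.image g, ?_, hXcard, ?_, b, ?_⟩
  · intro z hz; obtain ⟨a, _, rfl⟩ := mem_image.1 hz; exact hgmem a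
  · rw [Finset.card_image_of_injective s hginj]; exact hscard
  · intro x hx y hy z hz hxy
    obtain ⟨a, ha, rfl⟩ := mem_image.1 hz
    rw [hprop a x hx y hy hxy]; exact hsp a ha

lemma seq11 (t m : ℕ) : ∃ N : ℕ, ∀ (V : Type) [DecidableEq V] (S Z : Finset V)
    (χ : V → V → Bool), N ≤ S.card → t ≤ Z.card →
    ∃ g : Fin t → V, (∀ a, g a ∈ Z) ∧ Function.Injective g ∧
      ∃ col : Fin t → Bool, ∃ X ⊆ S, m ≤ X.card ∧
        ∀ a, ∀ x ∈ X, χ x (g a) = col a := by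
  induction t with
  | zero =>
    exact ⟨m, fun V _ S Z χ hS _ => ⟨Fin.elim0, fun a => a.elim0, fun a => a.elim0,
      Fin.elim0, S, Finset.Subset.refl S, hS, fun a => a.elim0⟩⟩
  | succ t ih =>
    obtain ⟨N, hN⟩ := ih
    refine ⟨2*N, fun V _ S Z χ hS hZ => ?_⟩
    obtain ⟨v, hv⟩ : Z.Nonempty := card_pos.1 (by omega)
    obtain ⟨b0, T, hTsub, hTcard, hTp⟩ := half_lemma S (fun x => χ x v) N hS
    obtain ⟨g, hgmem, hginj, col, X, hXsub, hXcard, hprop⟩ := hN V T (Z.erase v) χ hTcard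
      (by rw [card_erase_of_mem hv]; omega)
    have hgv : ∀ a, g a ≠ v := fun a h => (mem_erase.1 (hgmem a)).1 h
    refine ⟨Fin.cons v g, ?_, ?_, Fin.cons b0 col, X, hXsub.trans hTsub, hXcard, ?_⟩
    · intro a
      refine Fin.cases hv (fun a' => ?_) a
      exact (erase_subset v Z) (hgmem a')
    · rw [Fin.cons_injective_iff]
      exact ⟨fun ⟨a, ha⟩ => hgv a ha, hginj⟩
    · intro a
      refine Fin.cases ?_ ?_ a
      · intro x hx
        simpa using hTp x (hXsub hx)
      · intro a' x hx
        simpa using hprop a' x hx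

lemma L11 (m : ℕ) : ∃ N : ℕ, ∀ (V : Type) [DecidableEq V] (S Z : Finset V)
    (χ : V → V → Bool), N ≤ S.card → N ≤ Z.card →
    ∃ X ⊆ S, ∃ C ⊆ Z, m ≤ X.card ∧ m ≤ C.card ∧ ∃ b,
      ∀ x ∈ X, ∀ z ∈ C, χ x z = b := by
  obtain ⟨N, hN⟩ := seq11 (2*m) m
  refine ⟨max N (2*m), fun V _ S Z χ hS hZ => ?_⟩
  obtain ⟨g, hgmem, hginj, col, X, hXsub, hXcard, hprop⟩ :=
    hN V S Z χ (le_trans (le_max_left _ _) hS) (le_trans (le_max_right _ _) hZ)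
  obtain ⟨b, s, hscard, hsp⟩ := pigeonFin _ col m le_rfl
  refine ⟨X, hXsub, s.image g, ?_, hXcard, ?_, b, ?_⟩
  · intro z hz; obtain ⟨a, _, rfl⟩ := mem_image.1 hz; exact hgmem a
  · rw [Finset.card_image_of_injective s hginj]; exact hscard
  · intro x hx z hz
    obtain ⟨a, ha, rfl⟩ := mem_image.1 hz
    rw [hprop a x hx]; exact hsp a ha

lemma seq111 (t m : ℕ) : ∃ N : ℕ, ∀ (V : Type) [DecidableEq V] (S T Z : Finset V)
    (χ : V → V → V → Bool), N ≤ S.card → N ≤ T.card → t ≤ Z.card →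
    ∃ g : Fin t → V, (∀ a, g a ∈ Z) ∧ Function.Injective g ∧
      ∃ col : Fin t → Bool, ∃ A ⊆ S, ∃ B ⊆ T, m ≤ A.card ∧ m ≤ B.card ∧
        ∀ a, ∀ x ∈ A, ∀ y ∈ B, χ x y (g a) = col a := by
  induction t with
  | zero =>
    exact ⟨m, fun V _ S T Z χ hS hT _ => ⟨Fin.elim0, fun a => a.elim0, fun a => a.elim0,
      Fin.elim0, S, Finset.Subset.refl S, T, Finset.Subset.refl T, hS, hT, fun a => a.elim0⟩⟩
  | succ t ih =>
    obtain ⟨N, hN⟩ := ih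
    obtain ⟨M, hM⟩ := L11 N
    refine ⟨M, fun V _ S T Z χ hS hT hZ => ?_⟩
    obtain ⟨v, hv⟩ : Z.Nonempty := card_pos.1 (by omega)
    obtain ⟨A', hA'sub, B', hB'sub, hA'card, hB'card, b0, hp0⟩ :=
      hM V S T (fun x y => χ x y v) hS hT
    obtain ⟨g, hgmem, hginj, col, A, hAsub, B, hBsub, hAcard, hBcard, hprop⟩ :=
      hN V A' B' (Z.erase v) χ hA'card hB'card (by rw [card_erase_of_mem hv]; omega)
    have hgv : ∀ a, g a ≠ v := fun a h => (mem_erase.1 (hgmem a)).1 h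
    refine ⟨Fin.cons v g, ?_, ?_, Fin.cons b0 col, A, hAsub.trans hA'sub,
      B, hBsub.trans hB'sub, hAcard, hBcard, ?_⟩
    · intro a
      refine Fin.cases hv (fun a' => ?_) a
      exact (erase_subset v Z) (hgmem a')
    · rw [Fin.cons_injective_iff]
      exact ⟨fun ⟨a, ha⟩ => hgv a ha, hginj⟩
    · intro a
      refine Fin.cases ?_ ?_ a
      · intro x hx y hy
        simpa using hp0 x (hAsub hx) y (hBsub hy)
      · intro a' x hx y hy
        simpa using hprop a' x hx y hy

lemma L111 (m : ℕ) : ∃ N : ℕ, ∀ (V : Type) [DecidableEq V] (S T Z : Finset V)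
    (χ : V → V → V → Bool), N ≤ S.card → N ≤ T.card → N ≤ Z.card →
    ∃ A ⊆ S, ∃ B ⊆ T, ∃ C ⊆ Z, m ≤ A.card ∧ m ≤ B.card ∧ m ≤ C.card ∧ ∃ b,
      ∀ x ∈ A, ∀ y ∈ B, ∀ z ∈ C, χ x y z = b := by
  obtain ⟨N, hN⟩ := seq111 (2*m) m
  refine ⟨max N (2*m), fun V _ S T Z χ hS hT hZ => ?_⟩
  obtain ⟨g, hgmem, hginj, col, A, hAsub, B, hBsub, hAcard, hBcard, hprop⟩ :=
    hN V S T Z χ (le_trans (le_max_left _ _) hS) (le_trans (le_max_left _ _) hT)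
      (le_trans (le_max_right _ _) hZ)
  obtain ⟨b, s, hscard, hsp⟩ := pigeonFin _ col m le_rfl
  refine ⟨A, hAsub, B, hBsub, s.image g, ?_, hAcard, hBcard, ?_, b, ?_⟩
  · intro z hz; obtain ⟨a, _, rfl⟩ := mem_image.1 hz; exact hgmem a
  · rw [Finset.card_image_of_injective s hginj]; exact hscard
  · intro x hx y hy z hz
    obtain ⟨a, ha, rfl⟩ := mem_image.1 hz
    rw [hprop a x hx y hy]; exact hsp a ha

lemma mem_triples3 {n : ℕ} {X Y Z : Finset (Fin n)} {e : Finset (Fin n)} :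
    e ∈ triples3 n X Y Z ↔ e.card = 3 ∧ ∃ x ∈ X, ∃ y ∈ Y, ∃ z ∈ Z, e = {x, y, z} := by
  simp [triples3, Finset.mem_powersetCard, Finset.subset_univ]

def Homog (n : ℕ) (E : Finset (Finset (Fin n))) (X Y Z : Finset (Fin n)) : Prop :=
  ∃ b : Bool, ∀ e ∈ triples3 n X Y Z, (e ∈ E ↔ b = true)

lemma Homog.mono {n : ℕ} {E : Finset (Finset (Fin n))} {X Y Z X' Y' Z' : Finset (Fin n)}
    (hX : X' ⊆ X) (hY : Y' ⊆ Y) (hZ : Z' ⊆ Z) (h : Homog n E X Y Z) :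
    Homog n E X' Y' Z' := by
  obtain ⟨b, hb⟩ := h
  refine ⟨b, fun e he => ?_⟩
  rw [mem_triples3] at he
  obtain ⟨hc, x, hx, y, hy, z, hz, rfl⟩ := he
  exact hb _ (mem_triples3.2 ⟨hc, x, hX hx, y, hY hy, z, hZ hz, rfl⟩)

lemma Homog.dens {n : ℕ} {E : Finset (Finset (Fin n))} {X Y Z : Finset (Fin n)}
    (h : Homog n E X Y Z) : dens3 n E X Y Z = 0 ∨ dens3 n E X Y Z = 1 := by
  obtain ⟨b, hb⟩ := h
  cases b with
  | false =>
    left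
    have he : (triples3 n X Y Z).filter (fun e => e ∈ E) = ∅ := by
      rw [filter_eq_empty_iff]
      intro e hmem hE
      simpa using (hb e hmem).1 hE
    rw [dens3, he]; simp
  | true =>
    have he : (triples3 n X Y Z).filter (fun e => e ∈ E) = triples3 n X Y Z :=
      filter_true_of_mem fun e hmem => (hb e hmem).2 rfl
    rw [dens3, he]
    rcases eq_or_ne ((triples3 n X Y Z).card : ℝ) 0 with h0 | h0
    · left; rw [h0]; simp
    · right; exact div_self h0

lemma PP {ℓ : ℕ} (p : Fin ℓ × Fin ℓ × Fin ℓ) (m : ℕ) :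
    ∃ N, m ≤ N ∧ ∀ (n : ℕ) (E : Finset (Finset (Fin n))) (A : Fin ℓ → Finset (Fin n)),
      (∀ i, N ≤ (A i).card) →
      ∃ B : Fin ℓ → Finset (Fin n), (∀ i, B i ⊆ A i) ∧ (∀ i, m ≤ (B i).card) ∧
        Homog n E (B p.1) (B p.2.1) (B p.2.2) := by
  obtain ⟨i, j, k⟩ := p
  simp only
  by_cases hij : i = j
  · by_cases hik : i = k
    · -- all equal
      subst hij; subst hik
      obtain ⟨N0, hN0⟩ := R3 m
      refine ⟨max N0 m, le_max_right _ _, fun n E A hA => ?_⟩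
      obtain ⟨T, hTsub, hTcard, b, hb⟩ := hN0 (Fin n) (A i) (fun e => decide (e ∈ E))
        (le_trans (le_max_left _ _) (hA i))
      refine ⟨fun r => if r = i then T else A r, ?_, ?_, ?_⟩
      · intro r; by_cases h : r = i <;> simp [h, hTsub, Finset.Subset.refl]
      · intro r; by_cases h : r = i <;> simp [h]
        · subst h; exact hTcard
        · exact le_trans (le_max_right _ _) (hA r)
      · simp only [if_pos rfl]
        refine ⟨b, fun e he => ?_⟩
        rw [mem_triples3] at he
        obtain ⟨hc, x, hx, y, hy, z, hz, rfl⟩ := he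
        obtain ⟨h1, h2, h3⟩ := distinct_of_card3 hc
        rw [← decide_eq_true_iff (p := ({x,y,z} : Finset (Fin n)) ∈ E)]
        rw [hb x hx y hy z hz h1 h2 h3]
    · -- i = j ≠ k
      subst hij
      obtain ⟨N0, hN0⟩ := L21 m
      refine ⟨max N0 m, le_max_right _ _, fun n E A hA => ?_⟩
      obtain ⟨X, hXsub, C, hCsub, hXcard, hCcard, b, hb⟩ := hN0 (Fin n) (A i) (A k)
        (fun e => decide (e ∈ E)) (le_trans (le_max_left _ _) (hA i))
        (le_trans (le_max_left _ _) (hA k))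
      refine ⟨fun r => if r = i then X else if r = k then C else A r, ?_, ?_, ?_⟩
      · intro r
        by_cases h1 : r = i
        · subst h1; simpa using hXsub
        · by_cases h2 : r = k
          · subst h2; simp [h1]; exact hCsub
          · simp [h1, h2]
      · intro r
        by_cases h1 : r = i
        · subst h1; simpa using hXcard
        · by_cases h2 : r = k
          · subst h2; simp [h1]; exact hCcard
          · simp [h1, h2]; exact le_trans (le_max_right _ _) (hA r)
      · have hki : ¬ k = i := fun h => hik h.symm
        simp only [if_pos rfl, if_neg hki]
        refine ⟨b, fun e he => ?_⟩
        rw [mem_triples3] at he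
        obtain ⟨hc, x, hx, y, hy, z, hz, rfl⟩ := he
        obtain ⟨h1, _, _⟩ := distinct_of_card3 hc
        rw [← decide_eq_true_iff (p := ({x,y,z} : Finset (Fin n)) ∈ E)]
        rw [hb x hx y hy z hz h1]
  · by_cases hik : i = k
    · -- i = k ≠ j : pattern (i, j, i)
      subst hik
      obtain ⟨N0, hN0⟩ := L21 m
      refine ⟨max N0 m, le_max_right _ _, fun n E A hA => ?_⟩
      obtain ⟨X, hXsub, C, hCsub, hXcard, hCcard, b, hb⟩ := hN0 (Fin n) (A i) (A j)
        (fun e => decide (e ∈ E)) (le_trans (le_max_left _ _) (hA i))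
        (le_trans (le_max_left _ _) (hA j))
      refine ⟨fun r => if r = i then X else if r = j then C else A r, ?_, ?_, ?_⟩
      · intro r
        by_cases h1 : r = i
        · subst h1; simpa using hXsub
        · by_cases h2 : r = j
          · subst h2; simp [h1]; exact hCsub
          · simp [h1, h2]
      · intro r
        by_cases h1 : r = i
        · subst h1; simpa using hXcard
        · by_cases h2 : r = j
          · subst h2; simp [h1]; exact hCcard
          · simp [h1, h2]; exact le_trans (le_max_right _ _) (hA r)
      · have hji : j ≠ i := fun h => hij h.symm
        simp only [if_pos rfl, if_neg hji]
        refine ⟨b, fun e he => ?_⟩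
        rw [mem_triples3] at he
        obtain ⟨hc, x, hx, y, hy, z, hz, rfl⟩ := he
        obtain ⟨_, h2, _⟩ := distinct_of_card3 hc
        rw [← decide_eq_true_iff (p := ({x,y,z} : Finset (Fin n)) ∈ E)]
        rw [show ({x,y,z} : Finset (Fin n)) = {x,z,y} from swap23 x y z]
        rw [hb x hx z hz y hy h2]
    · by_cases hjk : j = k
      · -- j = k ≠ i : pattern (i, j, j)
        subst hjk
        obtain ⟨N0, hN0⟩ := L21 m
        refine ⟨max N0 m, le_max_right _ _, fun n E A hA => ?_⟩
        obtain ⟨X, hXsub, C, hCsub, hXcard, hCcard, b, hb⟩ := hN0 (Fin n) (A j) (A i)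
          (fun e => decide (e ∈ E)) (le_trans (le_max_left _ _) (hA j))
          (le_trans (le_max_left _ _) (hA i))
        refine ⟨fun r => if r = j then X else if r = i then C else A r, ?_, ?_, ?_⟩
        · intro r
          by_cases h1 : r = j
          · subst h1; simpa using hXsub
          · by_cases h2 : r = i
            · subst h2; simp [h1]; exact hCsub
            · simp [h1, h2]
        · intro r
          by_cases h1 : r = j
          · subst h1; simpa using hXcard
          · by_cases h2 : r = i
            · subst h2; simp [h1]; exact hCcard
            · simp [h1, h2]; exact le_trans (le_max_right _ _) (hA r)
        · simp only [if_pos rfl, if_neg hij]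
          refine ⟨b, fun e he => ?_⟩
          rw [mem_triples3] at he
          obtain ⟨hc, x, hx, y, hy, z, hz, rfl⟩ := he
          obtain ⟨_, _, h3⟩ := distinct_of_card3 hc
          rw [← decide_eq_true_iff (p := ({x,y,z} : Finset (Fin n)) ∈ E)]
          rw [show ({x,y,z} : Finset (Fin n)) = {y,z,x} from rot3 x y z]
          rw [hb y hy z hz x hx h3]
      · -- all distinct
        obtain ⟨N0, hN0⟩ := L111 m
        refine ⟨max N0 m, le_max_right _ _, fun n E A hA => ?_⟩
        obtain ⟨X, hXsub, Y, hYsub, C, hCsub, hXcard, hYcard, hCcard, b, hb⟩ :=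
          hN0 (Fin n) (A i) (A j) (A k) (fun x y z => decide (({x,y,z} : Finset (Fin n)) ∈ E))
            (le_trans (le_max_left _ _) (hA i)) (le_trans (le_max_left _ _) (hA j))
            (le_trans (le_max_left _ _) (hA k))
        refine ⟨fun r => if r = i then X else if r = j then Y else if r = k then C else A r,
          ?_, ?_, ?_⟩
        · intro r
          by_cases h1 : r = i
          · subst h1; simpa using hXsub
          · by_cases h2 : r = j
            · subst h2; simp [h1]; exact hYsub
            · by_cases h3 : r = k
              · subst h3; simp [h1, h2]; exact hCsub
              · simp [h1, h2, h3]
        · intro r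
          by_cases h1 : r = i
          · subst h1; simpa using hXcard
          · by_cases h2 : r = j
            · subst h2; simp [h1]; exact hYcard
            · by_cases h3 : r = k
              · subst h3; simp [h1, h2]; exact hCcard
              · simp [h1, h2, h3]; exact le_trans (le_max_right _ _) (hA r)
        · have hji : j ≠ i := fun h => hij h.symm
          have hki : k ≠ i := fun h => hik h.symm
          have hkj : k ≠ j := fun h => hjk h.symm
          simp only [if_pos rfl, if_neg hji, if_neg hki, if_neg hkj]
          refine ⟨b, fun e he => ?_⟩
          rw [mem_triples3] at he
          obtain ⟨hc, x, hx, y, hy, z, hz, rfl⟩ := he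
          rw [← decide_eq_true_iff (p := ({x,y,z} : Finset (Fin n)) ∈ E)]
          exact congrArg (· = true) (hb x hx y hy z hz) |>.to_iff

lemma MAIN {ℓ : ℕ} (L : List (Fin ℓ × Fin ℓ × Fin ℓ)) (m : ℕ) :
    ∃ N, m ≤ N ∧ ∀ (n : ℕ) (E : Finset (Finset (Fin n))) (A' : Fin ℓ → Finset (Fin n)),
      (∀ i, N ≤ (A' i).card) →
      ∃ A : Fin ℓ → Finset (Fin n), (∀ i, A i ⊆ A' i) ∧ (∀ i, m ≤ (A i).card) ∧
        ∀ p ∈ L, Homog n E (A p.1) (A p.2.1) (A p.2.2) := by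
  induction L with
  | nil =>
    exact ⟨m, le_rfl, fun n E A' h =>
      ⟨A', fun i => Finset.Subset.refl _, h, fun p hp => absurd hp List.not_mem_nil⟩⟩
  | cons p L ih =>
    obtain ⟨N1, hm1, h1⟩ := ih
    obtain ⟨N2, hm2, h2⟩ := PP p N1
    refine ⟨N2, le_trans hm1 hm2, fun n E A' hc => ?_⟩
    obtain ⟨B, hBsub, hBcard, hBhom⟩ := h2 n E A' hc
    obtain ⟨A, hAsub, hAcard, hAhom⟩ := h1 n E B hBcard
    refine ⟨A, fun i => (hAsub i).trans (hBsub i), hAcard, ?_⟩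
    intro q hq
    rcases List.mem_cons.1 hq with rfl | hq
    · exact Homog.mono (hAsub _) (hAsub _) (hAsub _) hBhom
    · exact hAhom q hq

theorem stmt11 (ℓ P : ℕ) :
    ∃ Q : ℕ, ∀ n : ℕ, ∀ E : Finset (Finset (Fin n)), (∀ e ∈ E, e.card = 3) →
      ∀ A' : Fin ℓ → Finset (Fin n),
        (∀ i j, i ≠ j → Disjoint (A' i) (A' j)) →
        (∀ i, Q ≤ (A' i).card) →
        ∃ A : Fin ℓ → Finset (Fin n),
          (∀ i, A i ⊆ A' i) ∧ (∀ i, (A i).card = P) ∧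
          ∀ i j k, dens3 n E (A i) (A j) (A k) = 0 ∨ dens3 n E (A i) (A j) (A k) = 1 := by
  obtain ⟨N, hmN, hN⟩ := MAIN ((Finset.univ : Finset (Fin ℓ × Fin ℓ × Fin ℓ)).toList) P
  refine ⟨N, fun n E _ A' _ hcard => ?_⟩
  obtain ⟨A, hsub, hcardA, hhom⟩ := hN n E A' hcard
  choose B hBsub hBcard using fun i => Finset.exists_subset_card_eq (s := A i) (n := P) (hcardA i)
  refine ⟨B, fun i => (hBsub i).trans (hsub i), hBcard, fun i j k => ?_⟩
  exact Homog.dens (Homog.mono (hBsub i) (hBsub j) (hBsub k)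
    (hhom (i, j, k) (by simp [Finset.mem_toList])))
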